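/- Under the same setup (W0 shape invariant with remainder R, W1m(x,a) = W1p(x,f(a)), W = W0 + W1p - W1m), suppose W satisfies the shape invariance condition W(x,a)² - W(x,f(a))² + ∂ₓW(x,f(a)) + ∂ₓW(x,a) = R(f(a)) for all x, a. Then the expression E(x,a) := W1p(x,a)² + ∂ₓW1p(x,a) + W1m(x,a)² + ∂ₓW1m(x,a) - 2·W0(x,a)·W1m(x,a) + 2·W0(x,a)·W1p(x,a) - 2·W1m(x,a)·W1p(x,a) satisfies E(x,a) = E(x,f(a)) for all x ∈ I and a ∈ A. In particular, if f acts transitively enough that this forces independence of a (e.g., A is the orbit of a single point under f and E(x,·) is constant on orbits), E is a function of x only. -/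

import Mathlib

/-- Shape invariance of the full superpotential implies the compatibility
expression `E(x,a)` satisfies `E(x,a) = E(x, f a)` (converse direction). -/
theorem shape_invariance_implies_compatibility_invariant
    {A : Type*} (I : Set ℝ) (hI : IsOpen I)
    (f : A → A) (R : A → ℝ) (W0 W1p : A → ℝ → ℝ)
    (h0 : ∀ a, ∀ x ∈ I, DifferentiableAt ℝ (W0 a) x)
    (hp : ∀ a, ∀ x ∈ I, DifferentiableAt ℝ (W1p a) x)
    (hsi0 : ∀ a, ∀ x ∈ I,
      (W0 a x) ^ 2 - (W0 (f a) x) ^ 2 + deriv (W0 (f a)) x + deriv (W0 a) x = R (f a))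
    (hsiW : ∀ a, ∀ x ∈ I,
      (W0 a x + W1p a x - W1p (f a) x) ^ 2
        - (W0 (f a) x + W1p (f a) x - W1p (f (f a)) x) ^ 2
        + deriv (fun y => W0 (f a) y + W1p (f a) y - W1p (f (f a)) y) x
        + deriv (fun y => W0 a y + W1p a y - W1p (f a) y) x = R (f a))
    (E : A → ℝ → ℝ)
    (hE : ∀ a, ∀ x, E a x =
      (W1p a x) ^ 2 + deriv (W1p a) x + (W1p (f a) x) ^ 2 + deriv (W1p (f a)) x
        - 2 * W0 a x * W1p (f a) x + 2 * W0 a x * W1p a x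
        - 2 * W1p (f a) x * W1p a x) :
    ∀ a, ∀ x ∈ I, E a x = E (f a) x := by
  intro a x hx
  have hd : ∀ b : A, deriv (fun y => W0 b y + W1p b y - W1p (f b) y) x
      = deriv (W0 b) x + deriv (W1p b) x - deriv (W1p (f b)) x := by
    intro b
    rw [deriv_fun_sub ((h0 b x hx).fun_add (hp b x hx)) (hp (f b) x hx),
      deriv_fun_add (h0 b x hx) (hp b x hx)]
  have h1 := hsiW a x hx
  rw [hd a, hd (f a)] at h1
  have h2 := hsi0 a x hx
  rw [hE a x, hE (f a) x]
  linear_combination h1 - h2
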